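/- Let n ≥ 2 and M ≥ n be integers, and let d be the comb leaf metric on {1,…,n} with parameter M. Let G be a simple graph on {1,…,n} that is a 2-spanner of ({1,…,n}, d), i.e., with each edge {i,j} of length d(i,j) the walk-distance satisfies d_G(i,j) ≤ 2·d(i,j) for all i,j. Then for every pair i ≠ j with {i,j} not an edge of G, there exists t ∉ {i,j} such that {i,t} and {t,j} are edges of G and |i−t| + |j−t| ≤ 2·|j−i|. -/
import Mathlib

open scoped ENNReal

/-- The total length of a walk with respect to an edge-length function. -/
noncomputable def walkLen {V : Type*} {G : SimpleGraph V} {x y : V}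
    (len : V → V → ℝ≥0∞) (p : G.Walk x y) : ℝ≥0∞ :=
  (p.darts.map (fun d => len d.toProd.1 d.toProd.2)).sum

/-- Walk-distance in a graph with edge lengths: the infimum over walks of the total
length (`∞` if no walk exists). -/
noncomputable def gdist {V : Type*} (G : SimpleGraph V) (len : V → V → ℝ≥0∞)
    (x y : V) : ℝ≥0∞ :=
  ⨅ p : G.Walk x y, walkLen len p

/-- The comb leaf metric on `{1,…,n}` with parameter `M`:
`d(i,j) = 2M + |i−j|` for `i ≠ j`, and `d(i,i) = 0`. -/
def combLeafD (n M : ℕ) (i j : Fin n) : ℝ :=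
  if i = j then 0 else 2 * M + |(i.val : ℝ) - (j.val : ℝ)|

lemma combLeafD_eq (n M : ℕ) {i j : Fin n} (h : i ≠ j) :
    combLeafD n M i j = 2 * M + |(i.val : ℝ) - (j.val : ℝ)| := by
  simp [combLeafD, h]

lemma combLeafD_nonneg (n M : ℕ) (i j : Fin n) : 0 ≤ combLeafD n M i j := by
  unfold combLeafD
  split
  · exact le_refl 0
  · positivity

/-- Let `n ≥ 2`, `M ≥ n`, and let `G` be a simple graph on
`{1,…,n}` that is a 2-spanner of the comb leaf metric with parameter `M`. Then
every non-adjacent pair `i ≠ j` admits a common neighbor `t ∉ {i,j}` with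
`|i−t| + |j−t| ≤ 2·|j−i|`. -/
theorem comb_leaf_two_spanner_two_hop (n M : ℕ) (hn : 2 ≤ n) (hM : n ≤ M)
    (G : SimpleGraph (Fin n))
    (hspan : ∀ x y : Fin n,
      gdist G (fun a b => ENNReal.ofReal (combLeafD n M a b)) x y ≤
        ENNReal.ofReal (2 * combLeafD n M x y)) :
    ∀ i j : Fin n, i ≠ j → ¬ G.Adj i j →
      ∃ t : Fin n, t ≠ i ∧ t ≠ j ∧ G.Adj i t ∧ G.Adj t j ∧
        |(i.val : ℝ) - (t.val : ℝ)| + |(j.val : ℝ) - (t.val : ℝ)| ≤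
          2 * |(j.val : ℝ) - (i.val : ℝ)| := by
  intro i j hij hadj
  by_contra hcon
  push_neg at hcon
  set len : Fin n → Fin n → ℝ≥0∞ :=
    fun a b => ENNReal.ofReal (combLeafD n M a b) with hlen
  have hMpos : (2 : ℕ) ≤ M := le_trans hn hM
  have hdart : ∀ {a b : Fin n}, a ≠ b →
      ENNReal.ofReal (2 * M + 1) ≤ len a b := by
    intro a b hab
    apply ENNReal.ofReal_le_ofReal
    rw [combLeafD_eq n M hab]
    have h1 : (1 : ℝ) ≤ |(a.val : ℝ) - (b.val : ℝ)| := by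
      have : (a.val : ℤ) ≠ (b.val : ℤ) := by
        exact_mod_cast fun h => hab (Fin.ext h)
      have h2 : (1 : ℤ) ≤ |(a.val : ℤ) - (b.val : ℤ)| :=
        Int.one_le_abs (sub_ne_zero.mpr this)
      exact_mod_cast h2
    linarith
  have habs : ∀ a b : Fin n, |(a.val : ℝ) - (b.val : ℝ)| ≤ M := by
    intro a b
    have ha : (a.val : ℝ) < n := by exact_mod_cast a.isLt
    have hb : (b.val : ℝ) < n := by exact_mod_cast b.isLt
    have hnM : (n : ℝ) ≤ M := by exact_mod_cast hM
    have ha0 : (0 : ℝ) ≤ a.val := by positivity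
    have hb0 : (0 : ℝ) ≤ b.val := by positivity
    rw [abs_sub_le_iff]
    constructor <;> linarith
  have key : ∀ p : G.Walk i j,
      ENNReal.ofReal (2 * combLeafD n M i j) + 1 ≤ walkLen len p := by
    intro p
    match p with
    | .nil => exact absurd rfl hij
    | .cons h .nil => exact absurd h hadj
    | .cons (v := t) h (.cons h2 .nil) =>
      -- two-dart walk i - t - j
      have hti : t ≠ i := h.ne'
      have htj : t ≠ j := by rintro rfl; exact hadj h
      have hc := hcon t hti htj h h2
      -- integer step
      have hc' : 2 * |(j.val : ℤ) - (i.val : ℤ)| + 1 ≤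
          |(i.val : ℤ) - (t.val : ℤ)| + |(j.val : ℤ) - (t.val : ℤ)| := by
        have : (2 * |(j.val : ℤ) - (i.val : ℤ)| : ℤ) <
            |(i.val : ℤ) - (t.val : ℤ)| + |(j.val : ℤ) - (t.val : ℤ)| := by
          exact_mod_cast hc
        exact Int.lt_iff_add_one_le.mp this
      have hcr : 2 * |(j.val : ℝ) - (i.val : ℝ)| + 1 ≤
          |(i.val : ℝ) - (t.val : ℝ)| + |(j.val : ℝ) - (t.val : ℝ)| := by
        exact_mod_cast hc'
      have hwl : walkLen len (SimpleGraph.Walk.cons h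
          (SimpleGraph.Walk.cons h2 SimpleGraph.Walk.nil)) = len i t + len t j := by
        simp [walkLen]
      rw [hwl, hlen]
      rw [show (1 : ℝ≥0∞) = ENNReal.ofReal 1 by simp,
        ← ENNReal.ofReal_add (by linarith [combLeafD_nonneg n M i j]) (by norm_num),
        ← ENNReal.ofReal_add (combLeafD_nonneg n M i t) (combLeafD_nonneg n M t j)]
      apply ENNReal.ofReal_le_ofReal
      rw [combLeafD_eq n M hij, combLeafD_eq n M h.ne, combLeafD_eq n M htj,
        abs_sub_comm ((t.val : ℝ)) ((j.val : ℝ))]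
      have := abs_sub_comm ((j.val : ℝ)) ((i.val : ℝ))
      linarith [hcr, abs_sub_comm ((i.val : ℝ)) ((j.val : ℝ))]
    | .cons (v := t) h (.cons (v := u) h2 (.cons (v := v) h3 s)) =>
      have hwl : walkLen len (SimpleGraph.Walk.cons h
          (SimpleGraph.Walk.cons h2 (SimpleGraph.Walk.cons h3 s))) =
          len i t + (len t u + (len u v + walkLen len s)) := by
        simp [walkLen]
      rw [hwl]
      have h1 := hdart h.ne
      have h2' := hdart h2.ne
      have h3' := hdart h3.ne
      calc ENNReal.ofReal (2 * combLeafD n M i j) + 1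
          ≤ ENNReal.ofReal (2 * M + 1) + (ENNReal.ofReal (2 * M + 1) +
            ENNReal.ofReal (2 * M + 1)) := by
            rw [show (1 : ℝ≥0∞) = ENNReal.ofReal 1 by simp,
              ← ENNReal.ofReal_add (by linarith [combLeafD_nonneg n M i j]) (by norm_num),
              ← ENNReal.ofReal_add (by positivity) (by positivity),
              ← ENNReal.ofReal_add (by positivity) (by positivity)]
            apply ENNReal.ofReal_le_ofReal
            rw [combLeafD_eq n M hij]
            have := habs i j
            linarith
        _ ≤ len i t + (len t u + (len u v + walkLen len s)) := by
            gcongr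
            exact le_add_right h3'
  have hg : ENNReal.ofReal (2 * combLeafD n M i j) + 1 ≤
      gdist G len i j := le_iInf key
  have hlt : ENNReal.ofReal (2 * combLeafD n M i j) <
      ENNReal.ofReal (2 * combLeafD n M i j) + 1 :=
    ENNReal.lt_add_right ENNReal.ofReal_ne_top one_ne_zero
  exact absurd (le_trans hg (hspan i j)) (not_le.mpr hlt)
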